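/- The determinant of the n×n tridiagonal matrix with corners — with diagonal entries a_1,…,a_n, superdiagonal entries b_1,…,b_{n-1}, subdiagonal entries c_1,…,c_{n-1}, entry c_0 in position (1,n) and entry b_n in position (n,1) — equals (-1)^{n+1}(b_n ⋯ b_1 + c_{n-1} ⋯ c_0) + tr( [[a_n, -b_{n-1}c_{n-1}],[1,0]] ⋯ [[a_2, -b_1c_1],[1,0]] · [[a_1, -b_n c_0],[1,0]] ). -/

import Mathlib

open Matrix

/-- The `n × n` tridiagonal matrix with corners: diagonal entries `a_1, …, a_n`,
superdiagonal entries `b_1, …, b_{n-1}`, subdiagonal entries `c_1, …, c_{n-1}`,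
entry `c_0` in position `(1, n)` and entry `b_n` in position `(n, 1)`
(`0`-based index `i : Fin n` codes the paper's index `i+1`). -/
def tridiagCorner (n : ℕ) (a b c : ℕ → ℂ) : Matrix (Fin n) (Fin n) ℂ :=
  fun i j =>
    (if (i : ℕ) = j then a (i + 1) else 0) +
    (if (j : ℕ) = i + 1 then b (i + 1) else 0) +
    (if (i : ℕ) = j + 1 then c i else 0) +
    (if (i : ℕ) = 0 ∧ (j : ℕ) = n - 1 then c 0 else 0) +
    (if (i : ℕ) = n - 1 ∧ (j : ℕ) = 0 then b n else 0)

/-- The partial products of the `2 × 2` transfer matrices for the corner case: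
rightmost factor `[[a_1, -b_n c_0], [1, 0]]`, then `[[a_k, -b_{k-1} c_{k-1}], [1, 0]]`
for `k = 2, …` with index decreasing from left to right. -/
noncomputable def cornerProd (n : ℕ) (a b c : ℕ → ℂ) : ℕ → Matrix (Fin 2) (Fin 2) ℂ
  | 0 => 1
  | 1 => !![a 1, -(b n * c 0); 1, 0]
  | k + 2 => !![a (k + 2), -(b (k + 1) * c (k + 1)); 1, 0] * cornerProd n a b c (k + 1)

def triEnt (a b c : ℕ → ℂ) (i j : ℕ) : ℂ :=
  (if i = j then a (i + 1) else 0) +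
  (if j = i + 1 then b (i + 1) else 0) +
  (if i = j + 1 then c i else 0)

def tri (k : ℕ) (a b c : ℕ → ℂ) : Matrix (Fin k) (Fin k) ℂ :=
  fun i j => triEnt a b c i j

@[simp] lemma tri_apply (k : ℕ) (a b c : ℕ → ℂ) (i j : Fin k) :
    tri k a b c i j = triEnt a b c i j := rfl

lemma triEnt_a (a b c : ℕ → ℂ) (i : ℕ) : triEnt a b c i i = a (i + 1) := by
  unfold triEnt
  rw [if_pos rfl, if_neg (by omega), if_neg (by omega)]; ring

lemma triEnt_b (a b c : ℕ → ℂ) (i : ℕ) : triEnt a b c i (i + 1) = b (i + 1) := by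
  unfold triEnt
  rw [if_neg (by omega), if_pos rfl, if_neg (by omega)]; ring

lemma triEnt_c (a b c : ℕ → ℂ) (j : ℕ) : triEnt a b c (j + 1) j = c (j + 1) := by
  unfold triEnt
  rw [if_neg (by omega), if_neg (by omega), if_pos rfl]; ring

lemma triEnt_zero (a b c : ℕ → ℂ) {i j : ℕ} (h1 : i ≠ j) (h2 : j ≠ i + 1) (h3 : i ≠ j + 1) :
    triEnt a b c i j = 0 := by
  unfold triEnt
  rw [if_neg h1, if_neg h2, if_neg h3]; ring

noncomputable def dd (a b c : ℕ → ℂ) : ℕ → ℂ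
  | 0 => 1
  | 1 => a 1
  | (k+2) => a (k+2) * dd a b c (k+1) - b (k+1) * c (k+1) * dd a b c k

noncomputable def ee (a b c : ℕ → ℂ) : ℕ → ℂ
  | 0 => 0
  | 1 => 1
  | (k+2) => a (k+2) * ee a b c (k+1) - b (k+1) * c (k+1) * ee a b c k

lemma coe_succAbove {n : ℕ} (p : Fin (n+1)) (i : Fin n) :
    (p.succAbove i : ℕ) = if (i:ℕ) < (p:ℕ) then (i:ℕ) else (i:ℕ)+1 := by
  rw [Fin.succAbove]
  split_ifs with h1 h2 h2 <;> simp_all [Fin.lt_def]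

lemma sum_two {n : ℕ} (f : Fin n → ℂ) (j1 j2 : Fin n) (h : j1 ≠ j2)
    (hz : ∀ j, j ≠ j1 → j ≠ j2 → f j = 0) : ∑ j, f j = f j1 + f j2 :=
  Finset.sum_eq_add j1 j2 h (fun c _ hc => hz c hc.1 hc.2) (by simp) (by simp)

theorem det_tri (a b c : ℕ → ℂ) : ∀ k, (tri k a b c).det = dd a b c k := by
  intro k
  induction k using Nat.twoStepInduction with
  | zero => simp [dd]
  | one => simp [Matrix.det_fin_one, tri, triEnt, dd]
  | more k ih1 ih2 =>
    rw [det_succ_row (tri (k+2) a b c) (Fin.last (k+1))]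
    rw [sum_two _ (⟨k, by omega⟩ : Fin (k+2)) (Fin.last (k+1))]
    · have e1 : tri (k+2) a b c (Fin.last (k+1)) ⟨k, by omega⟩ = c (k+1) := by
        rw [tri_apply, Fin.val_last, Fin.val_mk]; exact triEnt_c a b c k
      have e2 : tri (k+2) a b c (Fin.last (k+1)) (Fin.last (k+1)) = a (k+2) := by
        rw [tri_apply, Fin.val_last]; exact triEnt_a a b c (k+1)
      have hS2 : (tri (k+2) a b c).submatrix (Fin.last (k+1)).succAbove
          (Fin.last (k+1)).succAbove = tri (k+1) a b c := by
        ext i j; simp [tri, triEnt, Fin.succAbove_last]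
      have hS1 : ((tri (k+2) a b c).submatrix (Fin.last (k+1)).succAbove
          (⟨k, by omega⟩ : Fin (k+2)).succAbove).det = b (k+1) * dd a b c k := by
        rw [det_succ_column _ (Fin.last k)]
        rw [Fintype.sum_eq_single (Fin.last k)]
        · have eb : (tri (k+2) a b c).submatrix (Fin.last (k+1)).succAbove
              (⟨k, by omega⟩ : Fin (k+2)).succAbove (Fin.last k) (Fin.last k) = b (k+1) := by
            rw [Matrix.submatrix_apply, Fin.succAbove_last, tri_apply, coe_succAbove,
              Fin.coe_castSucc, Fin.val_last, Fin.val_mk, if_neg (lt_irrefl k)]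
            exact triEnt_b a b c k
          have hSS : ((tri (k+2) a b c).submatrix (Fin.last (k+1)).succAbove
              (⟨k, by omega⟩ : Fin (k+2)).succAbove).submatrix (Fin.last k).succAbove
              (Fin.last k).succAbove = tri k a b c := by
            ext i j
            rw [Matrix.submatrix_apply, Matrix.submatrix_apply, Fin.succAbove_last,
              Fin.succAbove_last, tri_apply, tri_apply, coe_succAbove, Fin.coe_castSucc,
              Fin.coe_castSucc, Fin.coe_castSucc, Fin.val_mk, if_pos (by omega : (j:ℕ) < k)]
          rw [eb, hSS, ih1, Fin.val_last]
          have h2 : ((-1:ℂ) ^ ((k:ℕ) + (k:ℕ))) = 1 := by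
            rw [← two_mul, pow_mul]; norm_num
          rw [h2]; ring
        · intro i hi
          have hz : (tri (k+2) a b c).submatrix (Fin.last (k+1)).succAbove
              (⟨k, by omega⟩ : Fin (k+2)).succAbove i (Fin.last k) = 0 := by
            have hik : (i : ℕ) ≠ k := by
              intro h; exact hi (Fin.ext h)
            have hil : (i : ℕ) < k + 1 := i.isLt
            rw [Matrix.submatrix_apply, Fin.succAbove_last, tri_apply, coe_succAbove,
              Fin.coe_castSucc, Fin.val_last, Fin.val_mk, if_neg (lt_irrefl k)]
            exact triEnt_zero a b c (by omega) (by omega) (by omega)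
          rw [hz]; ring
      rw [e1, e2, hS2, hS1, ih2]
      show _ = dd a b c (k+2)
      rw [dd, Fin.val_last, Fin.val_mk]
      have h2 : ((-1:ℂ) ^ ((k + 1) + k)) = -1 := by
        have : (k+1) + k = 2*k + 1 := by ring
        rw [this, pow_succ, pow_mul]; norm_num
      have h3 : ((-1:ℂ) ^ ((k + 1) + (k + 1))) = 1 := by
        have : (k+1) + (k+1) = 2*(k+1) := by ring
        rw [this, pow_mul]; norm_num
      rw [h2, h3]; ring
    · simp [Fin.ext_iff]
    · intro j hj1 hj2
      have h1 : (j : ℕ) ≠ k := fun h => hj1 (Fin.ext h)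
      have h2 : (j : ℕ) ≠ k + 1 := fun h => hj2 (Fin.ext (by simp [h]))
      have hjlt := j.isLt
      have hz : tri (k+2) a b c (Fin.last (k+1)) j = 0 := by
        rw [tri_apply, Fin.val_last]
        exact triEnt_zero a b c (by omega) (by omega) (by omega)
      rw [hz]; ring

lemma cornerProd_eq (n : ℕ) (a b c : ℕ → ℂ) : ∀ k,
    cornerProd n a b c (k + 1) =
      !![dd a b c (k + 1), -(b n * c 0) * ee a b c (k + 1);
         dd a b c k, -(b n * c 0) * ee a b c k] := by
  intro k
  induction k with
  | zero =>
    show !![a 1, -(b n * c 0); 1, 0] = _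
    rw [dd, dd, ee, ee]
    norm_num
  | succ k ih =>
    show !![a (k + 2), -(b (k + 1) * c (k + 1)); 1, 0] * cornerProd n a b c (k + 1) = _
    rw [ih, Matrix.mul_fin_two, dd, ee]
    congr 1 <;> ring

lemma ee_shift (a b c : ℕ → ℂ) : ∀ k,
    ee a b c (k + 1) = dd (fun i => a (i + 1)) (fun i => b (i + 1)) (fun i => c (i + 1)) k := by
  intro k
  induction k using Nat.twoStepInduction with
  | zero => rw [ee, dd]
  | one =>
    show ee a b c 2 = _
    rw [show (2:ℕ) = 0 + 2 from rfl, ee, ee, ee, dd]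
    ring
  | more k ih1 ih2 =>
    show ee a b c (k + 3) = _
    rw [show k + 3 = (k + 1) + 2 from rfl, ee, ih1, ih2, dd]

lemma triEnt_shift (a b c : ℕ → ℂ) (i j : ℕ) :
    triEnt a b c (i + 1) (j + 1) =
      triEnt (fun t => a (t + 1)) (fun t => b (t + 1)) (fun t => c (t + 1)) i j := by
  simp only [triEnt, add_left_inj]

lemma my_updateRow_comm {p : ℕ} (M : Matrix (Fin p) (Fin p) ℂ) {i1 i2 : Fin p} (h : i1 ≠ i2)
    (r1 r2 : Fin p → ℂ) :
    (M.updateRow i1 r1).updateRow i2 r2 = (M.updateRow i2 r2).updateRow i1 r1 := by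
  ext i j
  rw [Matrix.updateRow_apply, Matrix.updateRow_apply, Matrix.updateRow_apply,
    Matrix.updateRow_apply]
  split_ifs with h1 h2 <;> simp_all

lemma single_eq_smul {k : ℕ} (i : Fin (k+2)) (v : ℂ) :
    (Pi.single i v : Fin (k+2) → ℂ) = v • (Pi.single i (1:ℂ) : Fin (k+2) → ℂ) := by
  ext j
  by_cases h : j = i <;> simp [Pi.single_apply, h]

/-- Formula (1) of the paper: the determinant of a tridiagonal matrix with corners
equals `(-1)^{n+1} (b_n ⋯ b_1 + c_{n-1} ⋯ c_0)` plus the trace of the product of the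
associated `2 × 2` transfer matrices. -/
theorem det_tridiagCorner (n : ℕ) (hn : 2 ≤ n) (a b c : ℕ → ℂ)
    (hb : ∀ i, 1 ≤ i → i ≤ n → b i ≠ 0)
    (hc : ∀ i, i < n → c i ≠ 0) :
    (tridiagCorner n a b c).det =
      (-1 : ℂ) ^ (n + 1) *
          ((∏ i ∈ Finset.Icc 1 n, b i) + ∏ i ∈ Finset.range n, c i) +
        (cornerProd n a b c n).trace := by
  obtain ⟨m, rfl⟩ : ∃ m, n = m + 2 := ⟨n - 2, by omega⟩
  clear hn hb hc
  set a' : ℕ → ℂ := fun t => a (t + 1) with ha'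
  set b' : ℕ → ℂ := fun t => b (t + 1) with hb'
  set c' : ℕ → ℂ := fun t => c (t + 1) with hc'
  set T := tri (m+2) a b c with hT
  set L : Fin (m+2) := Fin.last (m+1) with hLdef
  have hL0 : L ≠ 0 := by simp [hLdef, Fin.ext_iff]
  have hTC : ∀ i j : Fin (m+2), tridiagCorner (m+2) a b c i j = triEnt a b c i j
      + (if (i:ℕ) = 0 ∧ (j:ℕ) = m + 1 then c 0 else 0)
      + (if (i:ℕ) = m + 1 ∧ (j:ℕ) = 0 then b (m+2) else 0) := by
    intro i j
    show _ + _ + _ = _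
    rw [show m + 2 - 1 = m + 1 from rfl]
    unfold triEnt
    ring
  -- decomposition of the matrix
  have hdec : tridiagCorner (m+2) a b c =
      (T.updateRow 0 (T 0 + Pi.single L (c 0))).updateRow L (T L + Pi.single 0 (b (m+2))) := by
    ext i j
    rw [hTC i j, Matrix.updateRow_apply, Matrix.updateRow_apply]
    rcases eq_or_ne i L with hiL | hiL
    · rw [if_pos hiL, hiL]
      have hLv : (L : ℕ) = m + 1 := rfl
      have hj : ((j : ℕ) = 0) = (j = (0 : Fin (m+2))) := propext ⟨fun h => Fin.ext h, fun h => congrArg Fin.val h⟩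
      rw [Pi.add_apply, Pi.single_apply, hLv, if_neg (by omega : ¬ ((m+1:ℕ) = 0 ∧ (j:ℕ) = m+1))]
      have : triEnt a b c (m+1) (j:ℕ) = T L j := by rw [hT, tri_apply, hLv]
      rw [this]
      by_cases h0 : (j : ℕ) = 0
      · rw [if_pos ⟨rfl, h0⟩, if_pos (Fin.ext h0)]
        ring
      · rw [if_neg (by omega), if_neg (fun h => h0 (congrArg Fin.val h))]
        ring
    · rw [if_neg hiL]
      rcases eq_or_ne i 0 with hi0 | hi0
      · rw [if_pos hi0, hi0]
        have h0v : ((0 : Fin (m+2)) : ℕ) = 0 := rfl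
        rw [Pi.add_apply, Pi.single_apply, h0v,
          if_neg (by omega : ¬ ((0:ℕ) = m + 1 ∧ (j:ℕ) = 0))]
        have : triEnt a b c 0 (j:ℕ) = T 0 j := by rw [hT, tri_apply, h0v]
        rw [this]
        by_cases hl : (j : ℕ) = m + 1
        · rw [if_pos ⟨rfl, hl⟩, if_pos (by simp [Fin.ext_iff, hLdef]; omega)]
          ring
        · rw [if_neg (by omega), if_neg (by simp [Fin.ext_iff, hLdef]; omega)]
          ring
      · rw [if_neg hi0]
        have h1 : (i : ℕ) ≠ 0 := fun h => hi0 (Fin.ext h)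
        have h2 : (i : ℕ) ≠ m + 1 := fun h => hiL (by simp [Fin.ext_iff, hLdef, h])
        rw [if_neg (by omega), if_neg (by omega), hT, tri_apply]
        ring
  -- split the determinant into four pieces
  have hrow0 : T 0 = (T.updateRow L (Pi.single 0 (b (m+2)))) 0 :=
    (Matrix.updateRow_ne hL0.symm).symm
  have hsplit : (tridiagCorner (m+2) a b c).det =
      T.det + (T.updateRow 0 (Pi.single L (c 0))).det
      + ((T.updateRow L (Pi.single 0 (b (m+2)))).det
      + ((T.updateRow L (Pi.single 0 (b (m+2)))).updateRow 0 (Pi.single L (c 0))).det) := by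
    rw [hdec, Matrix.det_updateRow_add]
    congr 1
    · have : T L = (T.updateRow 0 (T 0 + Pi.single L (c 0))) L := by
        rw [Matrix.updateRow_ne hL0]
      rw [this, Matrix.updateRow_eq_self, Matrix.det_updateRow_add, Matrix.updateRow_eq_self]
    · rw [my_updateRow_comm T (Ne.symm hL0), Matrix.det_updateRow_add, hrow0,
        Matrix.updateRow_eq_self]
  -- D1
  have hD1 : T.det = dd a b c (m+2) := det_tri a b c (m+2)
  -- D2
  have hD2 : (T.updateRow 0 (Pi.single L (c 0))).det =
      (-1:ℂ)^(m+1) * (c 0 * ∏ i : Fin (m+1), c (i + 1)) := by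
    rw [single_eq_smul, Matrix.det_updateRow_smul]
    set E : Matrix (Fin (m+2)) (Fin (m+2)) ℂ := T.updateRow 0 (Pi.single L (1:ℂ)) with hE
    rw [det_succ_row E 0, Fintype.sum_eq_single L]
    · have h1 : E 0 L = 1 := by rw [hE, Matrix.updateRow_self, Pi.single_eq_same]
      have h2 : E.submatrix (0 : Fin (m+2)).succAbove L.succAbove = Matrix.of (fun (i j : Fin (m+1)) =>
          triEnt a b c ((i:ℕ)+1) (j:ℕ)) := by
        ext i j
        rw [Matrix.submatrix_apply, Fin.zero_succAbove, hLdef, Fin.succAbove_last, hE,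
          Matrix.updateRow_ne (Fin.succ_ne_zero i), hT, tri_apply, Fin.val_succ,
          Fin.coe_castSucc, Matrix.of_apply]
      rw [h1, h2]
      have h3 : (Matrix.of (fun (i j : Fin (m+1)) => triEnt a b c ((i:ℕ)+1) (j:ℕ))).det =
          ∏ i : Fin (m+1), c ((i:ℕ) + 1) := by
        rw [Matrix.det_of_upperTriangular]
        · exact Finset.prod_congr rfl fun i _ => triEnt_c a b c i
        · intro i j hij
          have hij' : (j:ℕ) < (i:ℕ) := by simpa using hij
          exact triEnt_zero a b c (by omega) (by omega) (by omega)
      rw [h3, show ((0 : Fin (m+2)) : ℕ) = 0 from rfl, show (L : ℕ) = m + 1 from rfl]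
      ring
    · intro j hj
      have : E 0 j = 0 := by
        rw [hE, Matrix.updateRow_self, Pi.single_eq_of_ne hj]
      rw [this]
      ring
  -- D3
  have hD3 : (T.updateRow L (Pi.single 0 (b (m+2)))).det =
      (-1:ℂ)^(m+1) * (b (m+2) * ∏ i : Fin (m+1), b (i + 1)) := by
    rw [single_eq_smul, Matrix.det_updateRow_smul]
    set E : Matrix (Fin (m+2)) (Fin (m+2)) ℂ := T.updateRow L (Pi.single 0 (1:ℂ)) with hE
    rw [det_succ_row E L, Fintype.sum_eq_single 0]
    · have h1 : E L 0 = 1 := by rw [hE, Matrix.updateRow_self, Pi.single_eq_same]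
      have h2 : E.submatrix L.succAbove (0 : Fin (m+2)).succAbove = Matrix.of (fun (i j : Fin (m+1)) =>
          triEnt a b c (i:ℕ) ((j:ℕ)+1)) := by
        ext i j
        have hne : (Fin.castSucc i) ≠ Fin.last (m+1) := Fin.ne_of_lt (Fin.castSucc_lt_last i)
        rw [Matrix.submatrix_apply, Fin.zero_succAbove, hLdef, Fin.succAbove_last, hE, hLdef,
          Matrix.updateRow_ne hne, hT, tri_apply, Fin.val_succ, Fin.coe_castSucc, Matrix.of_apply]
      rw [h1, h2]
      have h3 : (Matrix.of (fun (i j : Fin (m+1)) => triEnt a b c (i:ℕ) ((j:ℕ)+1))).det =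
          ∏ i : Fin (m+1), b ((i:ℕ) + 1) := by
        rw [Matrix.det_of_lowerTriangular]
        · exact Finset.prod_congr rfl fun i _ => triEnt_b a b c i
        · intro i j hij
          have hij' : (i:ℕ) < (j:ℕ) := by simpa using hij
          exact triEnt_zero a b c (by omega) (by omega) (by omega)
      rw [h3, show ((0 : Fin (m+2)) : ℕ) = 0 from rfl, show (L : ℕ) = m + 1 from rfl]
      ring
    · intro j hj
      have : E L j = 0 := by
        rw [hE, Matrix.updateRow_self, Pi.single_eq_of_ne hj]
      rw [this]
      ring
  -- D4
  have hD4 : ((T.updateRow L (Pi.single 0 (b (m+2)))).updateRow 0 (Pi.single L (c 0))).det =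
      -(b (m+2) * c 0) * ee a b c (m+1) := by
    rw [single_eq_smul L (c 0), Matrix.det_updateRow_smul, my_updateRow_comm T hL0,
      single_eq_smul 0 (b (m+2)), Matrix.det_updateRow_smul]
    set E : Matrix (Fin (m+2)) (Fin (m+2)) ℂ :=
      (T.updateRow 0 (Pi.single L (1:ℂ))).updateRow L (Pi.single 0 (1:ℂ)) with hE
    have hdet : E.det = (-1:ℂ)^(m+1) * (-1:ℂ)^m * dd a' b' c' m := by
      rw [det_succ_row E 0, Fintype.sum_eq_single L]
      · have h1 : E 0 L = 1 := by
          rw [hE, Matrix.updateRow_ne (Ne.symm hL0), Matrix.updateRow_self, Pi.single_eq_same]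
        set M4 : Matrix (Fin (m+1)) (Fin (m+1)) ℂ :=
          E.submatrix (0 : Fin (m+2)).succAbove L.succAbove with hM4
        have hM4app : ∀ (i j : Fin (m+1)), M4 i j = E (Fin.succ i) (Fin.castSucc j) := by
          intro i j
          rw [hM4, Matrix.submatrix_apply, Fin.zero_succAbove, hLdef, Fin.succAbove_last]
        have hdet4 : M4.det = (-1:ℂ)^m * dd a' b' c' m := by
          rw [det_succ_row M4 (Fin.last m), Fintype.sum_eq_single 0]
          · have hsL : Fin.succ (Fin.last m) = L := by
              rw [hLdef]; ext; simp
            have h1' : M4 (Fin.last m) 0 = 1 := by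
              rw [hM4app, hsL, hE, Matrix.updateRow_self,
                show Fin.castSucc (0 : Fin (m+1)) = 0 from rfl, Pi.single_eq_same]
            have h2' : M4.submatrix (Fin.last m).succAbove (0 : Fin (m+1)).succAbove =
                tri m a' b' c' := by
              ext i j
              have hr : Fin.succ (Fin.castSucc i) ≠ (0 : Fin (m+2)) := Fin.succ_ne_zero _
              have hrL : Fin.succ (Fin.castSucc i) ≠ L := by
                rw [hLdef]
                intro h
                have := congrArg Fin.val h
                simp at this
                omega
              rw [Matrix.submatrix_apply, Fin.succAbove_last, Fin.zero_succAbove, hM4app,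
                hE, Matrix.updateRow_ne hrL, Matrix.updateRow_ne hr, hT, tri_apply,
                Fin.val_succ, Fin.coe_castSucc, Fin.coe_castSucc, Fin.val_succ,
                triEnt_shift, tri_apply]
            rw [h1', h2', det_tri, show ((0 : Fin (m+1)) : ℕ) = 0 from rfl,
              Fin.val_last]
            ring
          · intro j hj
            have hz : M4 (Fin.last m) j = 0 := by
              have hsL : Fin.succ (Fin.last m) = L := by
                rw [hLdef]; ext; simp
              have hcj : Fin.castSucc j ≠ (0 : Fin (m+2)) := by
                intro h
                apply hj
                have := congrArg Fin.val h
                simp at this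
                exact this
              rw [hM4app, hsL, hE, Matrix.updateRow_self, Pi.single_eq_of_ne hcj]
            rw [hz]
            ring
        rw [h1, hdet4, show ((0 : Fin (m+2)) : ℕ) = 0 from rfl,
          show (L : ℕ) = m + 1 from rfl]
        ring
      · intro j hj
        have : E 0 j = 0 := by
          rw [hE, Matrix.updateRow_ne (Ne.symm hL0), Matrix.updateRow_self,
            Pi.single_eq_of_ne hj]
        rw [this]
        ring
    rw [hdet, ee_shift]
    have hsgn : ((-1:ℂ)^(m+1)) * ((-1:ℂ)^m) = -1 := by
      rw [pow_succ, mul_comm ((-1:ℂ)^m) (-1), mul_assoc, ← pow_add, ← two_mul, pow_mul]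
      norm_num
    rw [mul_comm ((-1:ℂ)^(m+1)) ((-1:ℂ)^m)] at hsgn
    calc c 0 * (b (m+2) * ((-1:ℂ)^(m+1) * (-1:ℂ)^m * dd a' b' c' m))
        = ((-1:ℂ)^(m+1) * (-1:ℂ)^m) * (c 0 * b (m+2) * dd a' b' c' m) := by ring
      _ = -(b (m+2) * c 0) * dd a' b' c' m := by
          rw [mul_comm ((-1:ℂ)^m) ((-1:ℂ)^(m+1))] at hsgn
          rw [hsgn]; ring
  -- trace
  have htr : (cornerProd (m+2) a b c (m+2)).trace =
      dd a b c (m+2) + -(b (m+2) * c 0) * ee a b c (m+1) := by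
    rw [show m + 2 = (m+1) + 1 from rfl, cornerProd_eq, Matrix.trace_fin_two]
    norm_num
  -- products
  have hPc : (∏ i ∈ Finset.range (m+2), c i) = c 0 * ∏ i : Fin (m+1), c (i + 1) := by
    rw [Finset.prod_range_succ', Fin.prod_univ_eq_prod_range (fun i => c (i+1)) (m+1)]
    ring
  have hPb : (∏ i ∈ Finset.Icc 1 (m+2), b i) = b (m+2) * ∏ i : Fin (m+1), b (i + 1) := by
    rw [Finset.prod_Icc_succ_top (by omega : 1 ≤ m + 2),
      Fin.prod_univ_eq_prod_range (fun i => b (i+1)) (m+1)]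
    rw [show Finset.Icc 1 (m+1) = Finset.Ico 1 (m+2) from rfl, Finset.prod_Ico_eq_prod_range]
    rw [show m + 2 - 1 = m + 1 from rfl]
    rw [Finset.prod_congr rfl (fun i _ => by rw [add_comm 1 i])]
    ring
  rw [hsplit, hD1, hD2, hD3, hD4, htr, hPc, hPb]
  have hsgn2 : (-1:ℂ)^(m+2+1) = (-1:ℂ)^(m+1) := by
    rw [show m+2+1 = (m+1) + 2 from rfl, pow_add]
    norm_num
  rw [hsgn2]
  ring
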